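/- arXiv:0803.0336 — 2 statements merged into one kernel-verified Lean document; each statement's English description precedes it below -/
import Mathlib

section
/- Let ∂ : H₀ → H₁ and ∂ : H₁ → H₂ be closed densely defined operators between Hilbert spaces composing to zero, and let □ = ∂∂* + ∂*∂ be the associated (Gaffney) Laplacian on H₁, which is self-adjoint. If □ has closed range in H₁, then both ∂ : H₀ → H₁ and ∂* (adjoint of ∂ : H₁ → H₂) have closed range. -/
open scoped LinearPMap ComplexInnerProductSpace

private lemma pmap_apply_congr {E F : Type*} [NormedAddCommGroup E] [InnerProductSpace ℂ E]
    [NormedAddCommGroup F] [InnerProductSpace ℂ F]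
    {p q : E →ₗ.[ℂ] F} (h : p = q) (x : p.domain) (hx : (x : E) ∈ q.domain) :
    p x = q ⟨x, hx⟩ := by
  subst h; cases x; rfl

/-- If the (Gaffney) Laplacian `□ = ∂∂* + ∂*∂` of a Hilbert complex
`H₀ →∂₀ H₁ →∂₁ H₂` is self-adjoint and has closed range in `H₁`, then both
`∂₀ : H₀ → H₁` and `∂₁*` (the adjoint of `∂₁ : H₁ → H₂`) have closed range. -/
theorem closed_ranges_of_laplacian_closed_range
    {H₀ H₁ H₂ : Type*}
    [NormedAddCommGroup H₀] [InnerProductSpace ℂ H₀] [CompleteSpace H₀]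
    [NormedAddCommGroup H₁] [InnerProductSpace ℂ H₁] [CompleteSpace H₁]
    [NormedAddCommGroup H₂] [InnerProductSpace ℂ H₂] [CompleteSpace H₂]
    (d0 : H₀ →ₗ.[ℂ] H₁) (d1 : H₁ →ₗ.[ℂ] H₂)
    (h0dense : Dense (d0.domain : Set H₀)) (h1dense : Dense (d1.domain : Set H₁))
    (h0closed : d0.IsClosed) (h1closed : d1.IsClosed)
    (hcomplex : ∀ x : d0.domain, ∃ h : d0 x ∈ d1.domain, d1 ⟨d0 x, h⟩ = 0)
    (B : H₁ →ₗ.[ℂ] H₁)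
    (hBdom : ∀ u : H₁, u ∈ B.domain ↔
      ∃ (h1 : u ∈ d1.domain) (h2 : u ∈ (d0†).domain),
        d1 ⟨u, h1⟩ ∈ (d1†).domain ∧ d0† ⟨u, h2⟩ ∈ d0.domain)
    (hBval : ∀ (u : B.domain) (h1 : (u : H₁) ∈ d1.domain)
      (h2 : (u : H₁) ∈ (d0†).domain)
      (h3 : d1 ⟨(u : H₁), h1⟩ ∈ (d1†).domain)
      (h4 : d0† ⟨(u : H₁), h2⟩ ∈ d0.domain),
      B u = d1† ⟨d1 ⟨(u : H₁), h1⟩, h3⟩ + d0 ⟨d0† ⟨(u : H₁), h2⟩, h4⟩)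
    (hBsa : B† = B)
    (hBrange : IsClosed ((LinearMap.range B.toFun : Submodule ℂ H₁) : Set H₁)) :
    IsClosed ((LinearMap.range d0.toFun : Submodule ℂ H₁) : Set H₁) ∧
    IsClosed ((LinearMap.range (d1†).toFun : Submodule ℂ H₁) : Set H₁) := by
  classical
  set R0 : Submodule ℂ H₁ := LinearMap.range d0.toFun with hR0def
  set R1 : Submodule ℂ H₁ := LinearMap.range (d1†).toFun with hR1def
  set RB : Submodule ℂ H₁ := LinearMap.range B.toFun with hRBdef
  -- formal adjoint identities
  have formal0 := LinearPMap.adjoint_isFormalAdjoint h0dense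
  have formal1 := LinearPMap.adjoint_isFormalAdjoint h1dense
  -- orthogonality of range d1† and range d0
  have orth01 : ∀ (y : (d1†).domain) (x : d0.domain), ⟪(d1† y : H₁), (d0 x : H₁)⟫ = 0 := by
    intro y x
    obtain ⟨h, h0⟩ := hcomplex x
    have := formal1 y ⟨d0 x, h⟩
    rw [this, h0, inner_zero_right]
  -- elements of the kernel of B
  have kerB : ∀ (u : B.domain), B u = 0 →
      ∃ (h1 : (u : H₁) ∈ d1.domain) (h2 : (u : H₁) ∈ (d0†).domain),
        d1 ⟨(u : H₁), h1⟩ = 0 ∧ d0† ⟨(u : H₁), h2⟩ = 0 := by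
    intro u hu
    obtain ⟨h1, h2, h3, h4⟩ := (hBdom u).mp u.2
    refine ⟨h1, h2, ?_⟩
    have hval := hBval u h1 h2 h3 h4
    have hinner : (0 : ℂ) = ⟪(u : H₁), B u⟫ := by rw [hu, inner_zero_right]
    rw [hval, inner_add_right] at hinner
    have e1 : ⟪(u : H₁), (d1† ⟨d1 ⟨(u : H₁), h1⟩, h3⟩ : H₁)⟫
        = ((‖d1 ⟨(u : H₁), h1⟩‖ : ℂ)) ^ 2 := by
      rw [← inner_conj_symm]
      have := formal1 ⟨d1 ⟨(u : H₁), h1⟩, h3⟩ ⟨(u : H₁), h1⟩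
      rw [this, inner_self_eq_norm_sq_to_K]
      simp
    have e2 : ⟪(u : H₁), (d0 ⟨d0† ⟨(u : H₁), h2⟩, h4⟩ : H₁)⟫
        = ((‖d0† ⟨(u : H₁), h2⟩‖ : ℂ)) ^ 2 := by
      have := formal0 ⟨(u : H₁), h2⟩ ⟨d0† ⟨(u : H₁), h2⟩, h4⟩
      rw [← this, inner_self_eq_norm_sq_to_K]
      rfl
    rw [e1, e2] at hinner
    have hre : (0 : ℝ) = ‖d1 ⟨(u : H₁), h1⟩‖ ^ 2 + ‖d0† ⟨(u : H₁), h2⟩‖ ^ 2 := by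
      exact_mod_cast hinner
    constructor
    · have : ‖d1 ⟨(u : H₁), h1⟩‖ = 0 := by nlinarith [sq_nonneg ‖d1 ⟨(u : H₁), h1⟩‖, sq_nonneg ‖d0† ⟨(u : H₁), h2⟩‖]
      exact norm_eq_zero.mp this
    · have : ‖d0† ⟨(u : H₁), h2⟩‖ = 0 := by nlinarith [sq_nonneg ‖d1 ⟨(u : H₁), h1⟩‖, sq_nonneg ‖d0† ⟨(u : H₁), h2⟩‖]
      exact norm_eq_zero.mp this
  -- elements orthogonal to range B are in the kernel of B
  have hRBperp : ∀ w ∈ RBᗮ, ∃ hw : w ∈ B.domain, B ⟨w, hw⟩ = 0 := by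
    intro w hw
    have hwinner : ∀ x : B.domain, ⟪w, B x⟫ = 0 := by
      intro x
      have := (Submodule.mem_orthogonal RB w).mp hw (B x) ⟨x, rfl⟩
      rw [← inner_conj_symm, this, map_zero]
    have hw' : w ∈ (B†).domain :=
      LinearPMap.mem_adjoint_domain_of_exists w ⟨0, fun x => by rw [inner_zero_left, hwinner]⟩
    have hw0 : B† ⟨w, hw'⟩ = 0 := by
      by_cases hd : Dense (B.domain : Set H₁)
      · exact LinearPMap.adjoint_apply_eq hd _ (fun x => by rw [inner_zero_left]; exact (hwinner x).symm)
      · exact LinearPMap.adjoint_apply_of_not_dense hd _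
    have hwB : w ∈ B.domain := by rw [← hBsa]; exact hw'
    exact ⟨hwB, (pmap_apply_congr hBsa ⟨w, hw'⟩ hwB) ▸ hw0⟩
  -- kernel elements are orthogonal to range d0 and range d1†
  have ker_orth0 : ∀ (w : H₁) (hw : w ∈ B.domain), B ⟨w, hw⟩ = 0 →
      ∀ x : d0.domain, ⟪w, (d0 x : H₁)⟫ = 0 := by
    intro w hw hw0 x
    obtain ⟨h1, h2, hd1, hd0⟩ := kerB ⟨w, hw⟩ hw0
    have := formal0 ⟨w, h2⟩ x
    rw [hd0, inner_zero_left] at this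
    exact this.symm
  have ker_orth1 : ∀ (w : H₁) (hw : w ∈ B.domain), B ⟨w, hw⟩ = 0 →
      ∀ y : (d1†).domain, ⟪w, (d1† y : H₁)⟫ = 0 := by
    intro w hw hw0 y
    obtain ⟨h1, h2, hd1, hd0⟩ := kerB ⟨w, hw⟩ hw0
    have := formal1 y ⟨w, h1⟩
    rw [hd1, inner_zero_right] at this
    rw [← inner_conj_symm, this, map_zero]
  -- double orthogonal of RB is RB
  have hRB_oo : RBᗮᗮ = RB := by
    rw [Submodule.orthogonal_orthogonal_eq_closure]
    exact hBrange.submodule_topologicalClosure_eq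
  -- closure of R0 (resp. R1) is contained in RB
  have hclos : ∀ v : H₁, (v ∈ closure (R0 : Set H₁) ∨ v ∈ closure (R1 : Set H₁)) → v ∈ RB := by
    intro v hv
    rw [← hRB_oo]
    rw [Submodule.mem_orthogonal]
    intro w hw
    obtain ⟨hwB, hw0⟩ := hRBperp w hw
    have hcl : IsClosed {x : H₁ | ⟪w, x⟫ = 0} :=
      isClosed_eq (continuous_const.inner continuous_id) continuous_const
    rcases hv with hv | hv
    · have hsub : (R0 : Set H₁) ⊆ {x : H₁ | ⟪w, x⟫ = 0} := by
        rintro _ ⟨x, rfl⟩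
        exact ker_orth0 w hwB hw0 x
      exact closure_minimal hsub hcl hv
    · have hsub : (R1 : Set H₁) ⊆ {x : H₁ | ⟪w, x⟫ = 0} := by
        rintro _ ⟨y, rfl⟩
        exact ker_orth1 w hwB hw0 y
      exact closure_minimal hsub hcl hv
  constructor
  · apply isClosed_of_closure_subset
    intro v hv
    obtain ⟨u, hu⟩ := hclos v (Or.inl hv)
    obtain ⟨h1, h2, h3, h4⟩ := (hBdom u).mp u.2
    have hval := hBval u h1 h2 h3 h4
    set a : H₁ := d1† ⟨d1 ⟨(u : H₁), h1⟩, h3⟩ with ha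
    set b : H₁ := d0 ⟨d0† ⟨(u : H₁), h2⟩, h4⟩ with hb
    have hv_eq : v = a + b := by rw [← hu]; exact hval
    have hav : ⟪a, v⟫ = 0 := by
      have hcl : IsClosed {x : H₁ | ⟪a, x⟫ = 0} :=
        isClosed_eq (continuous_const.inner continuous_id) continuous_const
      have hsub : (R0 : Set H₁) ⊆ {x : H₁ | ⟪a, x⟫ = 0} := by
        rintro _ ⟨x, rfl⟩
        exact orth01 _ x
      exact closure_minimal hsub hcl hv
    have hab : ⟪a, b⟫ = 0 := orth01 _ _
    have ha0 : a = 0 := by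
      have : ⟪a, a⟫ = 0 := by
        have := hav
        rw [hv_eq, inner_add_right, hab, add_zero] at this
        exact this
      exact inner_self_eq_zero.mp this
    have : v = b := by rw [hv_eq, ha0, zero_add]
    rw [this]
    exact ⟨_, rfl⟩
  · apply isClosed_of_closure_subset
    intro v hv
    obtain ⟨u, hu⟩ := hclos v (Or.inr hv)
    obtain ⟨h1, h2, h3, h4⟩ := (hBdom u).mp u.2
    have hval := hBval u h1 h2 h3 h4
    set a : H₁ := d1† ⟨d1 ⟨(u : H₁), h1⟩, h3⟩ with ha
    set b : H₁ := d0 ⟨d0† ⟨(u : H₁), h2⟩, h4⟩ with hb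
    have hv_eq : v = a + b := by rw [← hu]; exact hval
    have hbv : ⟪b, v⟫ = 0 := by
      have hcl : IsClosed {x : H₁ | ⟪b, x⟫ = 0} :=
        isClosed_eq (continuous_const.inner continuous_id) continuous_const
      have hsub : (R1 : Set H₁) ⊆ {x : H₁ | ⟪b, x⟫ = 0} := by
        rintro _ ⟨y, rfl⟩
        show (⟪b, (d1† y : H₁)⟫ : ℂ) = 0
        rw [← inner_conj_symm, hb, orth01 y ⟨d0† ⟨(u : H₁), h2⟩, h4⟩, map_zero]
      exact closure_minimal hsub hcl hv
    have hba : ⟪b, a⟫ = 0 := by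
      have := orth01 ⟨d1 ⟨(u : H₁), h1⟩, h3⟩ ⟨d0† ⟨(u : H₁), h2⟩, h4⟩
      rw [← inner_conj_symm, this, map_zero]
    have hb0 : b = 0 := by
      have : ⟪b, b⟫ = 0 := by
        have := hbv
        rw [hv_eq, inner_add_right, hba, zero_add] at this
        exact this
      exact inner_self_eq_zero.mp this
    have : v = a := by rw [hv_eq, hb0, add_zero]
    rw [this]
    exact ⟨_, rfl⟩
end

section
/- Conversely, in a Hilbert complex, if ∂ has closed range in both H₁ and H₂ (i.e. range(∂ : H₀→H₁) and range(∂ : H₁→H₂) are closed), then the Laplacian □ = ∂∂* + ∂*∂ on H₁ has closed range; specifically one has the estimate ‖u‖² ≤ C⟨□u, u⟩ for all u ∈ dom(□) orthogonal to ker(□). -/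
open scoped LinearPMap ComplexInnerProductSpace

section Aux
set_option linter.unusedSectionVars false

variable {E F : Type*}
  [NormedAddCommGroup E] [InnerProductSpace ℂ E] [CompleteSpace E]
  [NormedAddCommGroup F] [InnerProductSpace ℂ F] [CompleteSpace F]

/-- Open mapping estimate for a closed operator with closed range. -/
lemma HodgeAux.pmap_open_mapping (f : E →ₗ.[ℂ] F) (hf : f.IsClosed)
    (hr : IsClosed ((LinearMap.range f.toFun : Submodule ℂ F) : Set F)) :
    ∃ c : ℝ, 0 ≤ c ∧ ∀ y ∈ LinearMap.range f.toFun,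
      ∃ x : f.domain, f x = y ∧ ‖(x : E)‖ ≤ c * ‖y‖ := by
  set G := f.graph with hG
  set R : Submodule ℂ F := LinearMap.range f.toFun with hR
  haveI : CompleteSpace G := hf.completeSpace_coe
  haveI : CompleteSpace R := hr.completeSpace_coe
  have hmem : ∀ g : G, ((g : E × F).2) ∈ R := by
    intro g
    obtain ⟨x, hx1, hx2⟩ := f.mem_graph_iff.mp g.2
    exact ⟨x, hx2⟩
  let φ : G →L[ℂ] R :=
    ContinuousLinearMap.codRestrict
      ((ContinuousLinearMap.snd ℂ E F).comp G.subtypeL) R hmem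
  have hsurj : Function.Surjective φ := by
    rintro ⟨y, x, hx⟩
    exact ⟨⟨((x : E), f x), f.mem_graph x⟩, Subtype.ext hx⟩
  obtain ⟨C, hC, hC'⟩ := ContinuousLinearMap.exists_preimage_norm_le φ hsurj
  refine ⟨C, le_of_lt hC, fun y hy => ?_⟩
  obtain ⟨g, hg1, hg2⟩ := hC' ⟨y, hy⟩
  obtain ⟨x, hx1, hx2⟩ := f.mem_graph_iff.mp g.2
  have hgy : ((g : E × F).2) = y := congrArg Subtype.val hg1
  refine ⟨x, by rw [hx2, hgy], ?_⟩
  calc ‖(x : E)‖ = ‖((g : E × F).1)‖ := by rw [hx1]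
    _ ≤ ‖(g : E × F)‖ := norm_fst_le _
    _ ≤ C * ‖(⟨y, hy⟩ : R)‖ := hg2
    _ = C * ‖y‖ := rfl

/-- A vector orthogonal to the range of `f` is in the adjoint domain and killed there. -/
lemma HodgeAux.adj_zero_of_orth (f : E →ₗ.[ℂ] F) (hdense : Dense (f.domain : Set E))
    (x : F) (hx : ∀ a : f.domain, ⟪x, f a⟫ = 0) :
    ∃ h : x ∈ (f†).domain, f† ⟨x, h⟩ = 0 := by
  have hmem : x ∈ (f†).domain :=
    LinearPMap.mem_adjoint_domain_of_exists x ⟨0, fun a => by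
      rw [inner_zero_left, hx a]⟩
  exact ⟨hmem, LinearPMap.adjoint_apply_eq hdense ⟨x, hmem⟩
    (fun a => by rw [inner_zero_left, hx a])⟩

/-- The adjoint of a densely defined operator is closed. -/
lemma HodgeAux.adjoint_isClosed (f : E →ₗ.[ℂ] F) (hdense : Dense (f.domain : Set E)) :
    (f†).IsClosed := by
  have hset : ((f†).graph : Set (F × E)) =
      ⋂ z : f.domain, {p : F × E | ⟪p.2, (z : E)⟫ = ⟪p.1, f z⟫} := by
    ext p
    simp only [Set.mem_iInter, Set.mem_setOf_eq, SetLike.mem_coe,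
      LinearPMap.mem_graph_iff]
    constructor
    · rintro ⟨y, hy1, hy2⟩ z
      rw [← hy2, ← hy1]
      exact LinearPMap.adjoint_isFormalAdjoint hdense y z
    · intro hp
      have hmem : p.1 ∈ (f†).domain :=
        LinearPMap.mem_adjoint_domain_of_exists p.1 ⟨p.2, fun a => hp a⟩
      exact ⟨⟨p.1, hmem⟩, rfl,
        LinearPMap.adjoint_apply_eq hdense ⟨p.1, hmem⟩ (fun a => hp a)⟩
  rw [LinearPMap.IsClosed, hset]
  refine isClosed_iInter fun z => isClosed_eq ?_ ?_
  · exact Continuous.inner continuous_snd continuous_const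
  · exact Continuous.inner continuous_fst continuous_const

end Aux

set_option maxHeartbeats 2000000 in
/-- Conversely, if `∂₀ : H₀ → H₁` and `∂₁ : H₁ → H₂` both have closed range, then the
Laplacian `□ = ∂∂* + ∂*∂` on `H₁` has closed range, with the estimate
`‖u‖² ≤ C ⟨□u, u⟩` for all `u ∈ dom □` orthogonal to `ker □`. -/
theorem laplacian_closed_range_of_closed_ranges
    {H₀ H₁ H₂ : Type*}
    [NormedAddCommGroup H₀] [InnerProductSpace ℂ H₀] [CompleteSpace H₀]
    [NormedAddCommGroup H₁] [InnerProductSpace ℂ H₁] [CompleteSpace H₁]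
    [NormedAddCommGroup H₂] [InnerProductSpace ℂ H₂] [CompleteSpace H₂]
    (d0 : H₀ →ₗ.[ℂ] H₁) (d1 : H₁ →ₗ.[ℂ] H₂)
    (h0dense : Dense (d0.domain : Set H₀)) (h1dense : Dense (d1.domain : Set H₁))
    (h0closed : d0.IsClosed) (h1closed : d1.IsClosed)
    (hcomplex : ∀ x : d0.domain, ∃ h : d0 x ∈ d1.domain, d1 ⟨d0 x, h⟩ = 0)
    (B : H₁ →ₗ.[ℂ] H₁)
    (hBdom : ∀ u : H₁, u ∈ B.domain ↔
      ∃ (h1 : u ∈ d1.domain) (h2 : u ∈ (d0†).domain),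
        d1 ⟨u, h1⟩ ∈ (d1†).domain ∧ d0† ⟨u, h2⟩ ∈ d0.domain)
    (hBval : ∀ (u : B.domain) (h1 : (u : H₁) ∈ d1.domain)
      (h2 : (u : H₁) ∈ (d0†).domain)
      (h3 : d1 ⟨(u : H₁), h1⟩ ∈ (d1†).domain)
      (h4 : d0† ⟨(u : H₁), h2⟩ ∈ d0.domain),
      B u = d1† ⟨d1 ⟨(u : H₁), h1⟩, h3⟩ + d0 ⟨d0† ⟨(u : H₁), h2⟩, h4⟩)
    (hBsa : B† = B)
    (hrange_d0 : IsClosed ((LinearMap.range d0.toFun : Submodule ℂ H₁) : Set H₁))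
    (hrange_d1 : IsClosed ((LinearMap.range d1.toFun : Submodule ℂ H₂) : Set H₂)) :
    IsClosed ((LinearMap.range B.toFun : Submodule ℂ H₁) : Set H₁) ∧
    ∃ C : ℝ, ∀ u : B.domain,
      (∀ v : B.domain, B v = 0 → ⟪(u : H₁), (v : H₁)⟫ = 0) →
      ‖(u : H₁)‖ ^ 2 ≤ C * (⟪B u, (u : H₁)⟫).re := by
  -- basic facts about B
  have hBdense : Dense (B.domain : Set H₁) :=
    (LinearPMap.isSelfAdjoint_def.mpr hBsa).dense_domain
  have hBclosed : B.IsClosed := hBsa ▸ HodgeAux.adjoint_isClosed B hBdense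
  -- formal adjoint identities
  have hform0 : ∀ (y : (d0†).domain) (x : d0.domain), ⟪d0† y, (x : H₀)⟫ = ⟪(y : H₁), d0 x⟫ :=
    LinearPMap.adjoint_isFormalAdjoint h0dense
  have hform1 : ∀ (y : (d1†).domain) (x : d1.domain), ⟪d1† y, (x : H₁)⟫ = ⟪(y : H₂), d1 x⟫ :=
    LinearPMap.adjoint_isFormalAdjoint h1dense
  -- the energy identity
  have hBinner : ∀ (u : B.domain) (h1 : (u : H₁) ∈ d1.domain)
      (h2 : (u : H₁) ∈ (d0†).domain),
      (⟪B u, (u : H₁)⟫).re = ‖d1 ⟨(u : H₁), h1⟩‖ ^ 2 + ‖d0† ⟨(u : H₁), h2⟩‖ ^ 2 := by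
    intro u h1 h2
    obtain ⟨h1', h2', h3, h4⟩ := (hBdom u).mp u.2
    have h3' : d1 ⟨(u : H₁), h1⟩ ∈ (d1†).domain := h3
    have h4' : d0† ⟨(u : H₁), h2⟩ ∈ d0.domain := h4
    rw [hBval u h1 h2 h3' h4', inner_add_left]
    have e1 : ⟪d1† ⟨d1 ⟨(u : H₁), h1⟩, h3'⟩, (u : H₁)⟫
        = ⟪d1 ⟨(u : H₁), h1⟩, d1 ⟨(u : H₁), h1⟩⟫ :=
      hform1 ⟨d1 ⟨(u : H₁), h1⟩, h3'⟩ ⟨(u : H₁), h1⟩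
    have e2 : ⟪d0† ⟨(u : H₁), h2⟩, (d0† ⟨(u : H₁), h2⟩ : H₀)⟫
        = ⟪(u : H₁), d0 ⟨d0† ⟨(u : H₁), h2⟩, h4'⟩⟫ :=
      hform0 ⟨(u : H₁), h2⟩ ⟨d0† ⟨(u : H₁), h2⟩, h4'⟩
    have e2' : ⟪d0 ⟨d0† ⟨(u : H₁), h2⟩, h4'⟩, (u : H₁)⟫
        = ⟪d0† ⟨(u : H₁), h2⟩, d0† ⟨(u : H₁), h2⟩⟫ := by
      rw [← inner_conj_symm, ← e2, inner_conj_symm]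
    rw [e1, e2']
    simp only [← RCLike.re_to_complex]
    rw [map_add, inner_self_eq_norm_sq, inner_self_eq_norm_sq]
  -- the closed subspaces
  set R0 : Submodule ℂ H₁ := LinearMap.range d0.toFun with hR0def
  set K1 : Submodule ℂ H₁ := d1.graph.comap (LinearMap.inl ℂ H₁ H₂) with hK1def
  have hK1mem : ∀ x : H₁, x ∈ K1 ↔ ∃ a : d1.domain, (a : H₁) = x ∧ d1 a = 0 := by
    intro x
    rw [hK1def, Submodule.mem_comap]
    exact d1.mem_graph_iff
  have hK1closed : IsClosed (K1 : Set H₁) := by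
    have : (K1 : Set H₁) = (fun x : H₁ => ((x, 0) : H₁ × H₂)) ⁻¹' (d1.graph : Set (H₁ × H₂)) := rfl
    rw [this]
    exact h1closed.preimage (continuous_id.prodMk continuous_const)
  have hR0K1 : R0 ≤ K1 := by
    rintro x ⟨a, rfl⟩
    obtain ⟨h, h0⟩ := hcomplex a
    exact (hK1mem _).mpr ⟨⟨d0 a, h⟩, rfl, h0⟩
  set K : Submodule ℂ H₁ := K1 ⊓ R0ᗮ with hKdef
  have hKclosed : IsClosed (K : Set H₁) := by
    rw [hKdef, Submodule.coe_inf]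
    exact hK1closed.inter R0.isClosed_orthogonal
  haveI : CompleteSpace K1 := hK1closed.completeSpace_coe
  haveI : CompleteSpace R0 := hrange_d0.completeSpace_coe
  haveI : CompleteSpace K := hKclosed.completeSpace_coe
  -- elements of K are in ker B
  have hKsub : ∀ x : H₁, x ∈ K → ∃ hx : x ∈ B.domain, B ⟨x, hx⟩ = 0 := by
    intro x hx
    obtain ⟨hxK1, hxR0⟩ := Submodule.mem_inf.mp hx
    obtain ⟨a, ha1, ha2⟩ := (hK1mem x).mp hxK1
    have h1 : x ∈ d1.domain := ha1 ▸ a.2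
    have hd1x : d1 ⟨x, h1⟩ = 0 := by
      have hax : (⟨x, h1⟩ : d1.domain) = a := Subtype.ext ha1.symm
      rw [hax]; exact ha2
    have horth : ∀ b : d0.domain, ⟪x, d0 b⟫ = 0 := by
      intro b
      rw [← inner_conj_symm]
      have : ⟪d0 b, x⟫ = 0 := hxR0 (d0 b) ⟨b, rfl⟩
      rw [this, map_zero]
    obtain ⟨h2, hd0x⟩ := HodgeAux.adj_zero_of_orth d0 h0dense x horth
    have h3 : d1 ⟨x, h1⟩ ∈ (d1†).domain := by rw [hd1x]; exact (d1†).domain.zero_mem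
    have h4 : d0† ⟨x, h2⟩ ∈ d0.domain := by rw [hd0x]; exact d0.domain.zero_mem
    have hxB : x ∈ B.domain := (hBdom x).mpr ⟨h1, h2, h3, h4⟩
    refine ⟨hxB, ?_⟩
    rw [hBval ⟨x, hxB⟩ h1 h2 h3 h4]
    have z1 : (⟨d1 ⟨x, h1⟩, h3⟩ : (d1†).domain) = 0 := Subtype.ext hd1x
    have z2 : (⟨d0† ⟨x, h2⟩, h4⟩ : d0.domain) = 0 := Subtype.ext hd0x
    rw [z1, z2]
    simp
  -- open mapping constants
  obtain ⟨c0, hc0, hc0'⟩ := HodgeAux.pmap_open_mapping d0 h0closed hrange_d0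
  obtain ⟨c1, hc1, hc1'⟩ := HodgeAux.pmap_open_mapping d1 h1closed hrange_d1
  -- estimate for elements of the domain of d1 orthogonal to ker d1
  have hq_est : ∀ x : d1.domain, (x : H₁) ∈ K1ᗮ → ‖(x : H₁)‖ ≤ c1 * ‖d1 x‖ := by
    intro x hxo
    obtain ⟨z, hz1, hz2⟩ := hc1' (d1 x) ⟨x, rfl⟩
    have hker : (x : H₁) - (z : H₁) ∈ K1 := by
      refine (hK1mem _).mpr ⟨x - z, rfl, ?_⟩
      rw [d1.map_sub, hz1, sub_self]
    have h0 : ⟪(x : H₁) - (z : H₁), (x : H₁)⟫ = 0 :=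
      (Submodule.mem_orthogonal K1 (x : H₁)).mp hxo _ hker
    have hxx : ‖(x : H₁)‖ ^ 2 = RCLike.re ⟪(z : H₁), (x : H₁)⟫ := by
      have : ⟪(x : H₁), (x : H₁)⟫ = ⟪(x : H₁) - (z : H₁), (x : H₁)⟫ + ⟪(z : H₁), (x : H₁)⟫ := by
        rw [← inner_add_left, sub_add_cancel]
      rw [← inner_self_eq_norm_sq (𝕜 := ℂ), this, h0, zero_add]
    have hle : RCLike.re ⟪(z : H₁), (x : H₁)⟫ ≤ ‖(z : H₁)‖ * ‖(x : H₁)‖ := re_inner_le_norm _ _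
    rcases (norm_nonneg (x : H₁)).eq_or_lt with h | h
    · rw [← h]; positivity
    · nlinarith [hz2, norm_nonneg (z : H₁), norm_nonneg (d1 x)]
  -- estimate for elements of the range of d0
  have hv_est : ∀ x : (d0†).domain, (x : H₁) ∈ R0 → ‖(x : H₁)‖ ≤ c0 * ‖d0† x‖ := by
    intro x hxm
    obtain ⟨a, ha1, ha2⟩ := hc0' (x : H₁) hxm
    have e : ⟪d0† x, (a : H₀)⟫ = ⟪(x : H₁), (x : H₁)⟫ := by
      rw [hform0 x a, ha1]
    have hxx : ‖(x : H₁)‖ ^ 2 = RCLike.re ⟪d0† x, (a : H₀)⟫ := by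
      rw [e, inner_self_eq_norm_sq]
    have hle : RCLike.re ⟪d0† x, (a : H₀)⟫ ≤ ‖d0† x‖ * ‖(a : H₀)‖ := re_inner_le_norm _ _
    rcases (norm_nonneg (x : H₁)).eq_or_lt with h | h
    · rw [← h]; positivity
    · nlinarith [ha2, norm_nonneg (a : H₀), norm_nonneg (d0† x)]
  -- the key estimate
  set C : ℝ := c0 ^ 2 + c1 ^ 2 with hCdef
  have hCnn : 0 ≤ C := by positivity
  have key : ∀ u : B.domain, (∀ x : H₁, x ∈ K → ⟪(u : H₁), x⟫ = 0) →
      ‖(u : H₁)‖ ^ 2 ≤ C * (⟪B u, (u : H₁)⟫).re := by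
    intro u horthK
    obtain ⟨h1, h2, h3, h4⟩ := (hBdom (u : H₁)).mp u.2
    set w1 := d1 ⟨(u : H₁), h1⟩ with hw1
    set w0 := d0† ⟨(u : H₁), h2⟩ with hw0
    set p : H₁ := (K1.orthogonalProjectionOnto (u : H₁) : H₁) with hp
    have hpK1 : p ∈ K1 := SetLike.coe_mem _
    set q : H₁ := (u : H₁) - p with hq
    have hqo : q ∈ K1ᗮ := Submodule.sub_starProjection_mem_orthogonal (K := K1) (u : H₁)
    -- q is in the domain of d1
    obtain ⟨ad, had, had0⟩ := (hK1mem p).mp hpK1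
    set qd : d1.domain := ⟨(u : H₁), h1⟩ - ad with hqd
    have hqdc : (qd : H₁) = q := by
      simp only [hqd, Submodule.coe_sub, had, hq]
    have hd1qd : d1 qd = w1 := by
      rw [hqd, d1.map_sub, had0, sub_zero, hw1]
    have hqest : ‖q‖ ≤ c1 * ‖w1‖ := by
      have := hq_est qd (by rw [hqdc]; exact hqo)
      rwa [hqdc, hd1qd] at this
    -- split p into a range part and a harmonic part
    set v : H₁ := (R0.orthogonalProjectionOnto p : H₁) with hv
    have hvR0 : v ∈ R0 := SetLike.coe_mem _
    set hh : H₁ := p - v with hhdef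
    have hhR0o : hh ∈ R0ᗮ := Submodule.sub_starProjection_mem_orthogonal (K := R0) p
    have hhK1 : hh ∈ K1 := K1.sub_mem hpK1 (hR0K1 hvR0)
    have hhK : hh ∈ K := Submodule.mem_inf.mpr ⟨hhK1, hhR0o⟩
    -- the harmonic part vanishes
    have hhzero : hh = 0 := by
      have e0 : ⟪(u : H₁), hh⟫ = 0 := horthK hh hhK
      have eq1 : ⟪q, hh⟫ = 0 := by
        rw [← inner_conj_symm]
        rw [(Submodule.mem_orthogonal K1 q).mp hqo hh hhK1, map_zero]
      have eq2 : ⟪v, hh⟫ = 0 :=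
        (Submodule.mem_orthogonal R0 hh).mp hhR0o v hvR0
      have : ⟪(u : H₁), hh⟫ = ⟪v, hh⟫ + ⟪hh, hh⟫ + ⟪q, hh⟫ := by
        rw [← inner_add_left, ← inner_add_left]
        congr 1
        rw [hhdef, hq]
        abel
      rw [e0, eq1, eq2, zero_add, add_zero] at this
      exact inner_self_eq_zero.mp this.symm
    have hpR0 : p ∈ R0 := by
      have : p = v := by rw [← sub_eq_zero, ← hhdef, hhzero]
      rw [this]; exact hvR0
    -- q is orthogonal to the range of d0, so it is killed by d0†
    have hqR0o : q ∈ R0ᗮ := Submodule.orthogonal_le hR0K1 hqo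
    have horthq : ∀ b : d0.domain, ⟪q, d0 b⟫ = 0 := by
      intro b
      rw [← inner_conj_symm]
      rw [(Submodule.mem_orthogonal R0 q).mp hqR0o (d0 b) ⟨b, rfl⟩, map_zero]
    obtain ⟨hq2, hq20⟩ := HodgeAux.adj_zero_of_orth d0 h0dense q horthq
    set vd : (d0†).domain := ⟨(u : H₁), h2⟩ - ⟨q, hq2⟩ with hvd
    have hvdc : (vd : H₁) = p := by
      simp only [hvd, Submodule.coe_sub, hq]
      abel
    have hd0vd : d0† vd = w0 := by
      rw [hvd, (d0†).map_sub, hq20, sub_zero, hw0]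
    have hvest : ‖p‖ ≤ c0 * ‖w0‖ := by
      have := hv_est vd (by rw [hvdc]; exact hpR0)
      rwa [hvdc, hd0vd] at this
    -- combine
    have hupq : (u : H₁) = p + q := by rw [hq]; abel
    have hpq : RCLike.re ⟪p, q⟫ = 0 := by
      rw [(Submodule.mem_orthogonal K1 q).mp hqo p hpK1]
      simp
    have hnorm : ‖(u : H₁)‖ ^ 2 = ‖p‖ ^ 2 + ‖q‖ ^ 2 := by
      rw [hupq, norm_add_sq (𝕜 := ℂ), hpq]
      ring
    rw [hBinner u h1 h2, ← hw1, ← hw0, hnorm]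
    have hA : ‖p‖ ^ 2 ≤ (c0 * ‖w0‖) ^ 2 := pow_le_pow_left₀ (norm_nonneg p) hvest 2
    have hB2 : ‖q‖ ^ 2 ≤ (c1 * ‖w1‖) ^ 2 := pow_le_pow_left₀ (norm_nonneg q) hqest 2
    have hfin : (c0 * ‖w0‖) ^ 2 + (c1 * ‖w1‖) ^ 2 ≤ C * (‖w1‖ ^ 2 + ‖w0‖ ^ 2) := by
      rw [hCdef]
      nlinarith [mul_nonneg (sq_nonneg c0) (sq_nonneg ‖w1‖),
        mul_nonneg (sq_nonneg c1) (sq_nonneg ‖w0‖)]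
    linarith
  constructor
  · -- closed range
    refine isClosed_of_closure_subset ?_
    intro y hy
    obtain ⟨yseq, hyseq, hylim⟩ := mem_closure_iff_seq_limit.mp hy
    choose w hw using hyseq
    -- project away the K-component
    have hKB : ∀ n, ∃ hx : ((K.orthogonalProjectionOnto ((w n : H₁)) : H₁)) ∈ B.domain,
        B ⟨_, hx⟩ = 0 := fun n => hKsub _ (SetLike.coe_mem _)
    set u' : ℕ → B.domain := fun n =>
      w n - ⟨(K.orthogonalProjectionOnto ((w n : H₁)) : H₁), (hKB n).choose⟩ with hu'def
    have hu'B : ∀ n, B (u' n) = yseq n := by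
      intro n
      rw [hu'def]
      simp only
      rw [B.map_sub, (hKB n).choose_spec, sub_zero]
      exact hw n
    have hu'orth : ∀ n, ∀ x : H₁, x ∈ K → ⟪((u' n : H₁)), x⟫ = 0 := by
      intro n x hx
      have hmem : ((u' n : H₁)) ∈ Kᗮ := by
        have : ((u' n : H₁)) = (w n : H₁) - (K.orthogonalProjectionOnto ((w n : H₁)) : H₁) := rfl
        rw [this]
        exact Submodule.sub_starProjection_mem_orthogonal (K := K) _
      rw [← inner_conj_symm, (Submodule.mem_orthogonal K _).mp hmem x hx, map_zero]
    -- Cauchy estimate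
    have hdiff : ∀ n m : ℕ, ‖((u' n : H₁)) - ((u' m : H₁))‖ ≤ C * ‖yseq n - yseq m‖ := by
      intro n m
      set Δ : B.domain := u' n - u' m with hΔ
      have hΔc : (Δ : H₁) = ((u' n : H₁)) - ((u' m : H₁)) := rfl
      have hΔorth : ∀ x : H₁, x ∈ K → ⟪(Δ : H₁), x⟫ = 0 := by
        intro x hx
        rw [hΔc, inner_sub_left, hu'orth n x hx, hu'orth m x hx, sub_zero]
      have hBΔ : B Δ = yseq n - yseq m := by
        rw [hΔ, B.map_sub, hu'B, hu'B]
      have hk := key Δ hΔorth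
      rw [hBΔ] at hk
      have hre : RCLike.re ⟪yseq n - yseq m, (Δ : H₁)⟫ ≤ ‖yseq n - yseq m‖ * ‖(Δ : H₁)‖ :=
        re_inner_le_norm _ _
      rw [← RCLike.re_to_complex] at hk
      rcases (norm_nonneg (Δ : H₁)).eq_or_lt with h | h
      · rw [hΔc] at h; rw [← h]; positivity
      · rw [← hΔc]
        nlinarith [norm_nonneg (yseq n - yseq m)]
    have hycauchy : CauchySeq yseq := hylim.cauchySeq
    have hucauchy : CauchySeq (fun n => ((u' n : H₁))) := by
      rw [Metric.cauchySeq_iff]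
      intro ε hε
      obtain ⟨N, hN⟩ := (Metric.cauchySeq_iff).mp hycauchy (ε / (C + 1))
        (by positivity)
      refine ⟨N, fun m hm n hn => ?_⟩
      have h1 := hdiff m n
      have h2 := hN m hm n hn
      rw [dist_eq_norm] at h2 ⊢
      have : C * ‖yseq m - yseq n‖ ≤ C * (ε / (C + 1)) :=
        mul_le_mul_of_nonneg_left (le_of_lt h2) hCnn
      have hfin : C * (ε / (C + 1)) < ε := by
        have hlt : C * (ε / (C + 1)) < (C + 1) * (ε / (C + 1)) :=
          mul_lt_mul_of_pos_right (by linarith) (by positivity)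
        have heq : (C + 1) * (ε / (C + 1)) = ε := by field_simp
        linarith
      calc ‖((u' m : H₁)) - ((u' n : H₁))‖ ≤ C * ‖yseq m - yseq n‖ := hdiff m n
        _ ≤ C * (ε / (C + 1)) := this
        _ < ε := hfin
    obtain ⟨u, hu⟩ := cauchySeq_tendsto_of_complete hucauchy
    have hgraph : ∀ n, (((u' n : H₁)), yseq n) ∈ B.graph := by
      intro n
      have := B.mem_graph (u' n)
      rwa [hu'B n] at this
    have hlim2 : Filter.Tendsto (fun n => (((u' n : H₁)), yseq n)) Filter.atTop
        (nhds (u, y)) := hu.prodMk_nhds hylim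
    have hmem : (u, y) ∈ B.graph :=
      hBclosed.mem_of_tendsto hlim2 (Filter.Eventually.of_forall hgraph)
    obtain ⟨x, hx1, hx2⟩ := B.mem_graph_iff.mp hmem
    exact ⟨x, hx2⟩
  · -- the estimate
    refine ⟨C, fun u hu => ?_⟩
    refine key u fun x hx => ?_
    obtain ⟨hxB, hxB0⟩ := hKsub x hx
    exact hu ⟨x, hxB⟩ hxB0
end
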